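/- In the right-to-left model, define b_k (k ≥ 0) by b₀ = s₂ − 1 and b_k = ((s₂ − 1)/z) s₂^{k−1} for k ≥ 1, where s₂ is the root of z u² + (z² − z − 1)u + 1 = 0 with the minus sign. Then for 0 < z < 1/4 these satisfy the recursions a_k = [k = 0] + z b_{k+1} and b_k = z b_{k+1} + z ∑_{0 ≤ j < k} a_j, where a_k = [k=0] + z b_{k+1}. -/

import Mathlib

/-- in the right-to-left model, b₀ = s₂ − 1 and
b_k = ((s₂ − 1)/z) s₂^{k−1} (k ≥ 1), together with a_k = [k = 0] + z b_{k+1},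
satisfy a_k = [k = 0] + z b_{k+1} and b_k = z b_{k+1} + z ∑_{0 ≤ j < k} a_j. -/
theorem stmt9 (z s₂ : ℝ) (hz : 0 < z) (hz' : z < 1/4)
    (hs₂ : s₂ = (1 + z - z^2 - Real.sqrt (z^4 - 2*z^3 - z^2 - 2*z + 1)) / (2*z))
    (a b : ℕ → ℝ)
    (hb0 : b 0 = s₂ - 1)
    (hb : ∀ k ≥ 1, b k = ((s₂ - 1) / z) * s₂ ^ (k - 1))
    (ha : ∀ k, a k = (if k = 0 then 1 else 0) + z * b (k + 1)) :
    (∀ k, a k = (if k = 0 then 1 else 0) + z * b (k + 1)) ∧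
    (∀ k, b k = z * b (k + 1) + z * ∑ j ∈ Finset.range k, a j) := by
  have hzne : z ≠ 0 := ne_of_gt hz
  have hDpos : 0 ≤ z^4 - 2*z^3 - z^2 - 2*z + 1 := by nlinarith [pow_pos hz 3, pow_pos hz 4, sq_nonneg z]
  have hsq : Real.sqrt (z^4 - 2*z^3 - z^2 - 2*z + 1) ^ 2 = z^4 - 2*z^3 - z^2 - 2*z + 1 :=
    Real.sq_sqrt hDpos
  have h2 : 2*z*s₂ - (1 + z - z^2) = -(Real.sqrt (z^4 - 2*z^3 - z^2 - 2*z + 1)) := by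
    rw [hs₂]; field_simp; ring
  have h3 : (2*z*s₂ - (1 + z - z^2))^2 = z^4 - 2*z^3 - z^2 - 2*z + 1 := by
    rw [h2, neg_sq]; exact hsq
  have hmul : z * (z*s₂^2 + (z^2 - z - 1)*s₂ + 1) = 0 := by linear_combination h3/4
  have hquad : z*s₂^2 + (z^2 - z - 1)*s₂ + 1 = 0 := by
    rcases mul_eq_zero.1 hmul with h | h
    · exact absurd h hzne
    · exact h
  have hA0 : a 0 = s₂ := by
    rw [ha 0, hb 1 le_rfl]
    simp only [pow_zero, mul_one, if_pos rfl]
    field_simp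
    norm_num
  have hAk : ∀ k, a (k+1) = (s₂ - 1) * s₂ ^ (k+1) := by
    intro k
    rw [ha (k+1), hb (k+2) (by omega)]
    simp only [Nat.add_sub_cancel, if_neg (Nat.succ_ne_zero k)]
    field_simp
    simp only [zero_add, show k + 2 - 1 = k + 1 by omega]
  have hS : ∀ k, ∑ j ∈ Finset.range (k+1), a j = s₂ ^ (k+1) := by
    intro k
    induction k with
    | zero => simp [hA0]
    | succ n ih =>
      rw [Finset.sum_range_succ, ih, hAk n]
      ring
  refine ⟨ha, ?_⟩
  intro k
  cases k with
  | zero =>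
    simp only [Finset.range_zero, Finset.sum_empty, mul_zero, add_zero]
    rw [hb0, hb 1 le_rfl]
    field_simp
    norm_num
  | succ n =>
    rw [hb (n+1) (by omega), hb (n+2) (by omega), hS n]
    simp only [Nat.add_sub_cancel]
    rw [show n + 2 - 1 = n + 1 by omega]
    field_simp
    linear_combination (-(s₂^n)) * hquad
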